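/- Let D₄(H) ⊆ H ⊗ 𝔏₅ and D̄₄(H) ⊆ H ⊗ 𝔏̄₅ be the kernels of the ℤ-linear bracket maps h ⊗ u ↦ [h,u] into 𝔏₆ and 𝔏̄₆ respectively. Then the map q : D₄(H) → D̄₄(H) induced by id_H ⊗ p₅, where p₅ : 𝔏₅ → 𝔏̄₅ is the canonical projection, is surjective, and its kernel equals (H ⊗ (⟨⟨ω⟩⟩ ∩ 𝔏₅)) ∩ D₄(H). -/

import Mathlib

open scoped TensorProduct

noncomputable section

/-- The free Lie ring `𝔏` on the `2g` generators. -/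
abbrev L (g : ℕ) : Type := FreeLieAlgebra ℤ (Fin (2 * g))

/-- The free abelian group `H` of rank `2g`. -/
abbrev H (g : ℕ) : Type := Fin (2 * g) → ℤ

/-- The canonical inclusion of `H` into `𝔏` as the degree `1` part. -/
def toL (g : ℕ) : H g →ₗ[ℤ] L g where
  toFun v := ∑ i, v i • FreeLieAlgebra.of ℤ i
  map_add' x y := by simp [add_smul, Finset.sum_add_distrib]
  map_smul' c x := by simp [Finset.smul_sum, smul_smul]

/-- Index of the basis element `aᵢ`. -/
def aIdx (g : ℕ) (i : Fin g) : Fin (2 * g) := ⟨i.1, by have := i.2; omega⟩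

/-- Index of the basis element `bᵢ`. -/
def bIdx (g : ℕ) (i : Fin g) : Fin (2 * g) := ⟨g + i.1, by have := i.2; omega⟩

/-- The basis element `aᵢ` of `H`. -/
def aV (g : ℕ) (i : Fin g) : H g := Pi.single (aIdx g i) 1

/-- The basis element `bᵢ` of `H`. -/
def bV (g : ℕ) (i : Fin g) : H g := Pi.single (bIdx g i) 1

/-- The symplectic pairing `ω : H × H → ℤ`, with `ω(aᵢ,bⱼ) = δᵢⱼ`, `ω(aᵢ,aⱼ) = ω(bᵢ,bⱼ) = 0`. -/
def omegaPair (g : ℕ) (x y : H g) : ℤ :=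
  ∑ i : Fin g, (x (aIdx g i) * y (bIdx g i) - x (bIdx g i) * y (aIdx g i))

/-- `IsBrkt g k x` means that `x` is a `k`-fold Lie bracket of elements of `H`. -/
inductive IsBrkt (g : ℕ) : ℕ → L g → Prop
  | of (v : H g) : IsBrkt g 1 (toL g v)
  | lie {m n : ℕ} {x y : L g} : IsBrkt g m x → IsBrkt g n y → IsBrkt g (m + n) ⁅x, y⁆

/-- `𝔏ₖ`, the degree-`k` homogeneous component of the free Lie ring:
the `ℤ`-span of all `k`-fold Lie brackets of elements of `H`. -/
def homog (g k : ℕ) : Submodule ℤ (L g) := Submodule.span ℤ {x | IsBrkt g k x}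

lemma toL_mem (g : ℕ) (v : H g) : toL g v ∈ homog g 1 :=
  Submodule.subset_span (IsBrkt.of v)

lemma lie_mem_homog {g m n : ℕ} {x y : L g} (hx : x ∈ homog g m) (hy : y ∈ homog g n) :
    ⁅x, y⁆ ∈ homog g (m + n) := by
  induction hx using Submodule.span_induction with
  | mem a ha =>
    induction hy using Submodule.span_induction with
    | mem b hb => exact Submodule.subset_span (ha.lie hb)
    | zero => simp
    | add b c hb hc ihb ihc => rw [lie_add]; exact Submodule.add_mem _ ihb ihc
    | smul t b hb ihb => rw [lie_smul]; exact Submodule.smul_mem _ t ihb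
  | zero => simp
  | add a c ha hc iha ihc => rw [add_lie]; exact Submodule.add_mem _ iha ihc
  | smul t a ha iha => rw [smul_lie]; exact Submodule.smul_mem _ t iha

/-- `[[a,b],c]` as an element of `𝔏₃`. -/
def trip (g : ℕ) (a b c : H g) : ↥(homog g 3) :=
  ⟨⁅⁅toL g a, toL g b⁆, toL g c⁆,
    Submodule.subset_span (((IsBrkt.of a).lie (IsBrkt.of b)).lie (IsBrkt.of c))⟩

/-- The symplectic element `ω = Σᵢ [aᵢ, bᵢ] ∈ 𝔏₂`. -/
def omegaL (g : ℕ) : L g := ∑ i : Fin g, ⁅toL g (aV g i), toL g (bV g i)⁆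

lemma omegaL_mem (g : ℕ) : omegaL g ∈ homog g 2 :=
  Submodule.sum_mem _ fun i _ =>
    Submodule.subset_span ((IsBrkt.of (aV g i)).lie (IsBrkt.of (bV g i)))

/-- The Lie ideal `⟨⟨ω⟩⟩` of `𝔏` generated by `ω`. -/
def omegaIdeal (g : ℕ) : LieIdeal ℤ (L g) := LieSubmodule.lieSpan ℤ (L g) {omegaL g}

end

noncomputable section

/-- The submodule `⟨⟨ω⟩⟩ ∩ 𝔏ₖ`, viewed inside `𝔏ₖ`. -/
def Jsub (g k : ℕ) : Submodule ℤ ↥(homog g k) :=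
  Submodule.comap (homog g k).subtype (omegaIdeal g).toSubmodule

/-- `𝔏̄ₖ = 𝔏ₖ / (⟨⟨ω⟩⟩ ∩ 𝔏ₖ)`. -/
abbrev Lbar (g k : ℕ) : Type := ↥(homog g k) ⧸ Jsub g k

/-- The canonical projection `p : 𝔏ₖ → 𝔏̄ₖ`. -/
def pbar (g k : ℕ) : ↥(homog g k) →ₗ[ℤ] Lbar g k := (Jsub g k).mkQ

/-- The bilinear bracket map `H × 𝔏₅ → 𝔏₆`, `(h, u) ↦ [h, u]`. -/
def brB (g : ℕ) : H g →ₗ[ℤ] ↥(homog g 5) →ₗ[ℤ] ↥(homog g 6) :=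
  LinearMap.mk₂ ℤ
    (fun h u => ⟨⁅toL g h, (u : L g)⁆, by
      have h6 : (6 : ℕ) = 1 + 5 := rfl
      rw [h6]
      exact lie_mem_homog (toL_mem g h) u.2⟩)
    (fun h₁ h₂ u => Subtype.ext (by
      show ⁅toL g (h₁ + h₂), (u : L g)⁆ = ⁅toL g h₁, (u : L g)⁆ + ⁅toL g h₂, (u : L g)⁆
      rw [map_add, add_lie]))
    (fun c h u => Subtype.ext (by
      show ⁅toL g (c • h), (u : L g)⁆ = c • ⁅toL g h, (u : L g)⁆
      rw [map_smul, smul_lie]))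
    (fun h u₁ u₂ => Subtype.ext (by
      show ⁅toL g h, (u₁ : L g) + (u₂ : L g)⁆ = ⁅toL g h, (u₁ : L g)⁆ + ⁅toL g h, (u₂ : L g)⁆
      rw [lie_add]))
    (fun c h u => Subtype.ext (by
      show ⁅toL g h, c • (u : L g)⁆ = c • ⁅toL g h, (u : L g)⁆
      rw [lie_smul]))

/-- The bracket map `β : H ⊗ 𝔏₅ → 𝔏₆`, `h ⊗ u ↦ [h, u]`. -/
def betaMap (g : ℕ) : (H g ⊗[ℤ] ↥(homog g 5)) →ₗ[ℤ] ↥(homog g 6) :=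
  TensorProduct.lift (brB g)

/-- `D₄(H)`, the kernel of the bracket map `H ⊗ 𝔏₅ → 𝔏₆`. -/
def D4 (g : ℕ) : Submodule ℤ (H g ⊗[ℤ] ↥(homog g 5)) := LinearMap.ker (betaMap g)

/-- Auxiliary map `𝔏₅ → Hom(H, 𝔏̄₆)`, `u ↦ (h ↦ [h,u] mod ⟨⟨ω⟩⟩)`. -/
def Cmap (g : ℕ) : ↥(homog g 5) →ₗ[ℤ] H g →ₗ[ℤ] Lbar g 6 :=
  (LinearMap.llcomp ℤ (H g) ↥(homog g 6) (Lbar g 6) (pbar g 6)).comp (brB g).flip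

lemma Jsub_le_ker_Cmap (g : ℕ) : Jsub g 5 ≤ LinearMap.ker (Cmap g) := by
  intro u hu
  rw [LinearMap.mem_ker]
  refine LinearMap.ext fun h => ?_
  have hu' : (u : L g) ∈ omegaIdeal g := (LieSubmodule.mem_toSubmodule _).mp hu
  have hmem : ⁅toL g h, (u : L g)⁆ ∈ omegaIdeal g := (omegaIdeal g).lie_mem hu'
  show pbar g 6 (brB g h u) = 0
  rw [pbar, Submodule.mkQ_apply, Submodule.Quotient.mk_eq_zero]
  exact Submodule.mem_comap.mpr ((LieSubmodule.mem_toSubmodule _).mpr hmem)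

/-- The bracket map `β̄ : H ⊗ 𝔏̄₅ → 𝔏̄₆`, `h ⊗ ū ↦ [h, u] mod ⟨⟨ω⟩⟩`. -/
def betaBar (g : ℕ) : (H g ⊗[ℤ] Lbar g 5) →ₗ[ℤ] Lbar g 6 :=
  TensorProduct.lift ((Jsub g 5).liftQ (Cmap g) (Jsub_le_ker_Cmap g)).flip

/-- `D̄₄(H)`, the kernel of the bracket map `H ⊗ 𝔏̄₅ → 𝔏̄₆`. -/
def D4bar (g : ℕ) : Submodule ℤ (H g ⊗[ℤ] Lbar g 5) := LinearMap.ker (betaBar g)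

/-- The map `id_H ⊗ p₅ : H ⊗ 𝔏₅ → H ⊗ 𝔏̄₅`. -/
def Phi (g : ℕ) : (H g ⊗[ℤ] ↥(homog g 5)) →ₗ[ℤ] (H g ⊗[ℤ] Lbar g 5) :=
  LinearMap.lTensor (H g) (pbar g 5)

lemma betaBar_comp_Phi (g : ℕ) :
    (betaBar g).comp (Phi g) = (pbar g 6).comp (betaMap g) := by
  apply TensorProduct.ext'
  intro h u
  rfl

lemma Phi_mem (g : ℕ) : ∀ x ∈ D4 g, Phi g x ∈ D4bar g := by
  intro x hx
  have h1 : betaBar g (Phi g x) = pbar g 6 (betaMap g x) :=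
    LinearMap.congr_fun (betaBar_comp_Phi g) x
  have h2 : betaMap g x = 0 := hx
  simp only [D4bar, LinearMap.mem_ker, h1, h2, map_zero]

/-- The map `q : D₄(H) → D̄₄(H)` induced by `id_H ⊗ p₅`. -/
def qMap (g : ℕ) : ↥(D4 g) →ₗ[ℤ] ↥(D4bar g) :=
  LinearMap.restrict (Phi g) (Phi_mem g)

/-! ### Auxiliary machinery: the grading of the free Lie ring -/

/-- The grading Lie homomorphism into the base change by `ℤ[X]`,
sending each generator to `X ⊗ (generator)`. -/
def phiGr (g : ℕ) : L g →ₗ⁅ℤ⁆ (Polynomial ℤ ⊗[ℤ] L g) :=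
  FreeLieAlgebra.lift ℤ (fun i => (Polynomial.X : Polynomial ℤ) ⊗ₜ[ℤ] FreeLieAlgebra.of ℤ i)

/-- Extraction of the coefficient of `X^k`. -/
def coeffT (g k : ℕ) : (Polynomial ℤ ⊗[ℤ] L g) →ₗ[ℤ] L g :=
  TensorProduct.lift ((LinearMap.lsmul ℤ (L g)).comp (Polynomial.lcoeff ℤ k))

lemma phiGr_isBrkt {g k : ℕ} {x : L g} (h : IsBrkt g k x) :
    phiGr g x = (Polynomial.X ^ k : Polynomial ℤ) ⊗ₜ[ℤ] x := by
  induction h with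
  | of v =>
    have hof : ∀ i, phiGr g (FreeLieAlgebra.of ℤ i)
        = (Polynomial.X : Polynomial ℤ) ⊗ₜ[ℤ] FreeLieAlgebra.of ℤ i := fun i =>
      FreeLieAlgebra.lift_of_apply _ _
    have hv : toL g v = ∑ i, v i • FreeLieAlgebra.of ℤ i := rfl
    show (phiGr g).toLinearMap (toL g v) = _
    rw [hv, map_sum]
    simp only [map_smul]
    show (∑ i, v i • phiGr g (FreeLieAlgebra.of ℤ i)) = _
    simp only [hof, pow_one, ← TensorProduct.tmul_smul, ← TensorProduct.tmul_sum]
  | lie hx hy ihx ihy =>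
    rw [(phiGr _).map_lie, ihx, ihy, LieAlgebra.ExtendScalars.bracket_tmul, ← pow_add]

lemma phiGr_homog {g k : ℕ} {x : L g} (hx : x ∈ homog g k) :
    phiGr g x = (Polynomial.X ^ k : Polynomial ℤ) ⊗ₜ[ℤ] x := by
  induction hx using Submodule.span_induction with
  | mem a ha => exact phiGr_isBrkt ha
  | zero =>
    show (phiGr g).toLinearMap 0 = _
    rw [map_zero, TensorProduct.tmul_zero]
  | add a b _ _ iha ihb =>
    show (phiGr g).toLinearMap (a + b) = _
    rw [map_add]
    show phiGr g a + phiGr g b = _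
    rw [iha, ihb, TensorProduct.tmul_add]
  | smul c a _ iha =>
    show (phiGr g).toLinearMap (c • a) = _
    rw [map_smul]
    show c • phiGr g a = _
    rw [iha, TensorProduct.tmul_smul]

lemma coeffT_phiGr {g k n : ℕ} {x : L g} (hx : x ∈ homog g n) :
    coeffT g k (phiGr g x) = if n = k then x else 0 := by
  rw [phiGr_homog hx]
  show (Polynomial.X ^ n : Polynomial ℤ).coeff k • x = _
  rw [Polynomial.coeff_X_pow]
  by_cases h : n = k
  · subst h; simp
  · rw [if_neg (fun hk => h hk.symm), if_neg h, zero_smul]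

/-- Iterated brackets `[h₁,[h₂,…,[hₘ,ω]…]]`. -/
def adChain (g : ℕ) (l : List (H g)) : L g :=
  l.foldr (fun h acc => ⁅toL g h, acc⁆) (omegaL g)

@[simp] lemma adChain_nil (g : ℕ) : adChain g [] = omegaL g := rfl

@[simp] lemma adChain_cons (g : ℕ) (h : H g) (l : List (H g)) :
    adChain g (h :: l) = ⁅toL g h, adChain g l⁆ := rfl

lemma adChain_mem_homog (g : ℕ) (l : List (H g)) :
    adChain g l ∈ homog g (l.length + 2) := by
  induction l with
  | nil => exact omegaL_mem g
  | cons h t ih =>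
    have := lie_mem_homog (toL_mem g h) ih
    rwa [show 1 + (t.length + 2) = (h :: t).length + 2 by simp; omega] at this

lemma adChain_mem_ideal (g : ℕ) (l : List (H g)) : adChain g l ∈ omegaIdeal g := by
  induction l with
  | nil => exact LieSubmodule.subset_lieSpan rfl
  | cons h t ih => exact (omegaIdeal g).lie_mem ih

/-- The degree-`(m+2)` graded piece of the ideal `⟨⟨ω⟩⟩`. -/
def Ide (g m : ℕ) : Submodule ℤ (L g) :=
  Submodule.span ℤ {x | ∃ l : List (H g), l.length = m ∧ adChain g l = x}

lemma Ide_le_homog (g m : ℕ) : Ide g m ≤ homog g (m + 2) := by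
  rw [Ide, Submodule.span_le]
  rintro x ⟨l, rfl, rfl⟩
  exact adChain_mem_homog g l

lemma toL_single (g : ℕ) (i : Fin (2 * g)) :
    toL g (Pi.single i 1) = FreeLieAlgebra.of ℤ i := by
  have hv : toL g (Pi.single i 1) = ∑ j, (Pi.single i 1 : H g) j • FreeLieAlgebra.of ℤ j := rfl
  rw [hv, Finset.sum_eq_single i]
  · simp
  · intro b _ hb; rw [Pi.single_apply, if_neg hb, zero_smul]
  · intro hi; exact absurd (Finset.mem_univ i) hi

lemma lieSpan_range_of (g : ℕ) :
    LieSubalgebra.lieSpan ℤ (L g) (Set.range (FreeLieAlgebra.of ℤ)) = ⊤ := by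
  set S := LieSubalgebra.lieSpan ℤ (L g) (Set.range (FreeLieAlgebra.of ℤ)) with hS
  let ψ : L g →ₗ⁅ℤ⁆ S := FreeLieAlgebra.lift ℤ fun i =>
    (⟨FreeLieAlgebra.of ℤ i, LieSubalgebra.subset_lieSpan ⟨i, rfl⟩⟩ : S)
  have key : S.incl.comp ψ = LieHom.id := by
    apply FreeLieAlgebra.hom_ext
    intro x
    show S.incl (ψ (FreeLieAlgebra.of ℤ x)) = FreeLieAlgebra.of ℤ x
    exact congrArg Subtype.val (FreeLieAlgebra.lift_of_apply (R := ℤ) _ x)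
  rw [eq_top_iff]
  intro x _
  have hx : S.incl (ψ x) = x := by simpa using DFunLike.congr_fun key x
  rw [← hx]
  exact (ψ x).2

/-- The stabilizer of `⨆ m, Ide g m` is a Lie subalgebra. -/
def stab (g : ℕ) : LieSubalgebra ℤ (L g) where
  carrier := {x | ∀ v ∈ ⨆ m, Ide g m, ⁅x, v⁆ ∈ ⨆ m, Ide g m}
  add_mem' := fun hx hy v hv => by
    rw [add_lie]; exact Submodule.add_mem _ (hx v hv) (hy v hv)
  zero_mem' := fun v hv => by rw [zero_lie]; exact Submodule.zero_mem _
  smul_mem' := fun c x hx v hv => by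
    rw [smul_lie]; exact Submodule.smul_mem _ c (hx v hv)
  lie_mem' := fun {x y} hx hy v hv => by
    rw [lie_lie]; exact Submodule.sub_mem _ (hx _ (hy v hv)) (hy _ (hx v hv))

lemma of_mem_stab (g : ℕ) (i : Fin (2 * g)) : FreeLieAlgebra.of ℤ i ∈ stab g := by
  intro v hv
  have hle : (⨆ m, Ide g m) ≤ Submodule.comap
      ((LieAlgebra.ad ℤ (L g)) (FreeLieAlgebra.of ℤ i)) (⨆ m, Ide g m) := by
    refine iSup_le fun m => ?_
    rw [Ide, Submodule.span_le]
    rintro x ⟨l, rfl, rfl⟩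
    simp only [SetLike.mem_coe, Submodule.mem_comap, LieAlgebra.ad_apply]
    have hch : ⁅FreeLieAlgebra.of ℤ i, adChain g l⁆ = adChain g (Pi.single i 1 :: l) := by
      rw [adChain_cons, toL_single]
    rw [hch]
    exact Submodule.mem_iSup_of_mem (l.length + 1)
      (Submodule.subset_span ⟨Pi.single i 1 :: l, by simp, rfl⟩)
  have := hle hv
  simpa [LieAlgebra.ad_apply] using this

lemma stab_eq_top (g : ℕ) : stab g = ⊤ := by
  rw [eq_top_iff, ← lieSpan_range_of g]
  refine le_trans (le_of_eq rfl) (LieSubalgebra.lieSpan_le.mpr ?_)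
  rintro x ⟨i, rfl⟩
  exact of_mem_stab g i

lemma lie_mem_NSup (g : ℕ) (x v : L g) (hv : v ∈ ⨆ m, Ide g m) :
    ⁅x, v⁆ ∈ ⨆ m, Ide g m := by
  have hx : x ∈ stab g := by rw [stab_eq_top]; trivial
  exact hx v hv

lemma ideal_le_NSup (g : ℕ) : ∀ x ∈ omegaIdeal g, x ∈ ⨆ m, Ide g m := by
  intro x hx
  let N' : LieIdeal ℤ (L g) :=
    { toSubmodule := ⨆ m, Ide g m
      lie_mem := fun {y m} hm => lie_mem_NSup g y m hm }
  have hle : omegaIdeal g ≤ N' := by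
    rw [omegaIdeal, LieSubmodule.lieSpan_le]
    intro y hy
    rw [Set.mem_singleton_iff] at hy
    subst hy
    show omegaL g ∈ ⨆ m, Ide g m
    exact Submodule.mem_iSup_of_mem 0 (Submodule.subset_span ⟨[], rfl, rfl⟩)
  exact hle hx

lemma mem_Ide_of_homog (g k : ℕ) {w : L g} (hI : w ∈ omegaIdeal g)
    (hw : w ∈ homog g (k + 2)) : w ∈ Ide g k := by
  have hN : w ∈ ⨆ m, Ide g m := ideal_le_NSup g w hI
  rw [Submodule.mem_iSup_iff_exists_finsupp] at hN
  obtain ⟨f, hf, hsum⟩ := hN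
  have hrepr : w = ∑ m ∈ f.support, coeffT g (k + 2) (phiGr g (f m)) := by
    have h1 : coeffT g (k + 2) (phiGr g w) = w := by rw [coeffT_phiGr hw]; simp
    have h2 : (phiGr g).toLinearMap (∑ m ∈ f.support, f m) = ∑ m ∈ f.support, phiGr g (f m) :=
      map_sum ((phiGr g).toLinearMap) _ _
    rw [← h1, ← hsum, Finsupp.sum]
    show coeffT g (k + 2) ((phiGr g).toLinearMap _) = _
    rw [h2, map_sum]
  rw [hrepr]
  refine Submodule.sum_mem _ fun m hm => ?_
  rw [coeffT_phiGr (Ide_le_homog g m (hf m))]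
  split_ifs with h
  · have hmk : m = k := by omega
    subst hmk
    exact hf m
  · exact Submodule.zero_mem _

lemma Ide_le_target (g : ℕ) :
    Ide g 4 ≤ Submodule.map (homog g 6).subtype
      (Submodule.map (betaMap g)
        (LinearMap.range (LinearMap.lTensor (H g) (Jsub g 5).subtype))) := by
  rw [Ide, Submodule.span_le]
  rintro x ⟨l, hl, rfl⟩
  obtain ⟨h, l', rfl⟩ : ∃ h l', l = h :: l' := by
    cases l with
    | nil => simp at hl
    | cons a t => exact ⟨a, t, rfl⟩
  have hl' : l'.length = 3 := by simpa using hl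
  have hv5 : adChain g l' ∈ homog g 5 := by
    have := adChain_mem_homog g l'
    rwa [hl'] at this
  set v : ↥(homog g 5) := ⟨adChain g l', hv5⟩ with hvdef
  have hvJ : v ∈ Jsub g 5 :=
    Submodule.mem_comap.mpr ((LieSubmodule.mem_toSubmodule _).mpr (adChain_mem_ideal g l'))
  have hz : (h ⊗ₜ[ℤ] v : H g ⊗[ℤ] ↥(homog g 5)) ∈
      LinearMap.range (LinearMap.lTensor (H g) (Jsub g 5).subtype) :=
    ⟨h ⊗ₜ[ℤ] (⟨v, hvJ⟩ : Jsub g 5), rfl⟩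
  exact ⟨betaMap g (h ⊗ₜ[ℤ] v), Submodule.mem_map_of_mem hz, rfl⟩

theorem stmt9 (g : ℕ) (hg : 1 ≤ g) :
    Function.Surjective (qMap g) ∧
    LinearMap.ker (qMap g) =
      Submodule.comap (D4 g).subtype
        (LinearMap.range (LinearMap.lTensor (H g) (Jsub g 5).subtype)) := by
  have hexact : Function.Exact (LinearMap.lTensor (H g) (Jsub g 5).subtype)
      (LinearMap.lTensor (H g) (pbar g 5)) :=
    Module.Flat.lTensor_exact (H g) (LinearMap.exact_subtype_mkQ (Jsub g 5))
  have hker : LinearMap.ker (Phi g)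
      = LinearMap.range (LinearMap.lTensor (H g) (Jsub g 5).subtype) :=
    LinearMap.exact_iff.mp hexact
  constructor
  · rintro ⟨y, hy⟩
    obtain ⟨x, hx⟩ := LinearMap.lTensor_surjective (H g)
      (Submodule.mkQ_surjective (Jsub g 5)) y
    have hx' : Phi g x = y := hx
    have h1 : pbar g 6 (betaMap g x) = 0 := by
      have hcong := LinearMap.congr_fun (betaBar_comp_Phi g) x
      rw [LinearMap.comp_apply, LinearMap.comp_apply] at hcong
      rw [← hcong]
      show betaBar g (Phi g x) = 0
      rw [hx']
      exact hy
    have hbx : (betaMap g x : L g) ∈ omegaIdeal g := by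
      have hJ : betaMap g x ∈ Jsub g 6 := (Submodule.Quotient.mk_eq_zero _).mp h1
      exact (LieSubmodule.mem_toSubmodule _).mp (Submodule.mem_comap.mp hJ)
    have hIde : (betaMap g x : L g) ∈ Ide g 4 :=
      mem_Ide_of_homog g 4 hbx (betaMap g x).2
    obtain ⟨u, hu, hu2⟩ := Ide_le_target g hIde
    obtain ⟨z, hz, rfl⟩ := hu
    have hzx : betaMap g z = betaMap g x := Subtype.ext hu2
    have hPhiz : Phi g z = 0 := by
      obtain ⟨z', rfl⟩ := hz
      show LinearMap.lTensor (H g) (pbar g 5) (LinearMap.lTensor (H g) (Jsub g 5).subtype z') = 0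
      rw [← LinearMap.lTensor_comp_apply]
      have h0 : (pbar g 5).comp (Jsub g 5).subtype = 0 := by
        ext j
        exact (Submodule.Quotient.mk_eq_zero _).mpr j.2
      rw [h0, LinearMap.lTensor_zero, LinearMap.zero_apply]
    have hD : x - z ∈ D4 g := by
      show betaMap g (x - z) = 0
      rw [map_sub, hzx, sub_self]
    refine ⟨⟨x - z, hD⟩, ?_⟩
    apply Subtype.ext
    show Phi g (x - z) = y
    rw [map_sub, hPhiz, sub_zero, hx']
  · ext x
    have hq : (qMap g x : H g ⊗[ℤ] Lbar g 5) = Phi g x.1 := rfl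
    simp only [LinearMap.mem_ker, Submodule.mem_comap, Submodule.coe_subtype]
    constructor
    · intro h0
      have hP : Phi g x.1 = 0 := by rw [← hq, h0]; rfl
      exact hker ▸ (LinearMap.mem_ker.mpr hP)
    · intro hr
      apply Subtype.ext
      rw [hq]
      exact LinearMap.mem_ker.mp (hker ▸ hr)

end
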